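/- Let U: Ω × (0,∞) → ℝ be a utility random field: U(·, x) is a random variable for each x ∈ (0,∞), and for each ω ∈ Ω the map U(ω, ·) is nondecreasing, concave and continuously differentiable on (0,∞), with derivative random field U′ and extensions U(·, 0) = lim_{x↓0} U(·, x), U′(·, 0) = lim_{x↓0} U′(·, x), U(∞) = lim_{x→∞} U(·, x). Assume E_P[0 ∨ U(∞)] < ∞. Let C ⊂ L0+ be convex, max-closed and bounded, containing some h with P[h = 0] = 0, and let g ∈ C^max satisfy E_P[U(g)] = sup_{f ∈ C} E_P[U(f)] < ∞. Assume further that E_P[U(n^{-1} g)] > −∞ for all n ∈ ℕ and that P[g > 0, U(g) < U(∞)] > 0. Then g is an outer support point of C; in fact the σ-finite measure μ defined by dμ = U′(g) dP satisfies 0 < sup_{f ∈ C} ∫ f dμ = ∫ g dμ < ∞. -/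

import Mathlib

open MeasureTheory Filter Set

noncomputable section

variable {Ω : Type*} [MeasurableSpace Ω]

/-- The nonnegative orthant `L⁰₊` of the space `L⁰` of (a.e.-equivalence classes of)
random variables over `(Ω, ℱ, P)`. -/
def L0plus (P : Measure Ω) : Set (Ω →ₘ[P] ℝ) := {f | 0 ≤ f}

/-- The metric `(f, g) ↦ E[1 ∧ |f - g|]` inducing the topology of convergence
in probability on `L⁰`. -/
def dist0 (P : Measure Ω) (f g : Ω →ₘ[P] ℝ) : ℝ :=
  ∫ ω, min 1 |f ω - g ω| ∂P

/-- Convergence in probability of a sequence in `L⁰`. -/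
def Tendsto0 (P : Measure Ω) (f : ℕ → Ω →ₘ[P] ℝ) (g : Ω →ₘ[P] ℝ) : Prop :=
  Tendsto (fun n => dist0 P (f n) g) atTop (nhds 0)

/-- Closure of a set in `L⁰` with respect to the topology of convergence in probability. -/
def closure0 (P : Measure Ω) (C : Set (Ω →ₘ[P] ℝ)) : Set (Ω →ₘ[P] ℝ) :=
  {f | ∀ ε : ℝ, 0 < ε → ∃ g ∈ C, dist0 P f g < ε}

/-- A set of `L⁰` is closed iff it contains its closure. -/
def IsClosed0 (P : Measure Ω) (C : Set (Ω →ₘ[P] ℝ)) : Prop :=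
  closure0 P C ⊆ C

/-- Boundedness (in probability) of a set `C ⊆ L⁰₊` : `lim_{ℓ → ∞} sup_{f ∈ C} P[f > ℓ] = 0`. -/
def Bounded0 (P : Measure Ω) (C : Set (Ω →ₘ[P] ℝ)) : Prop :=
  Tendsto (fun ℓ : ℝ => ⨆ f ∈ C, P {ω | ℓ < f ω}) atTop (nhds 0)

/-- The set `C^max` of maximal elements of `C ⊆ L⁰₊` : `f ∈ C` such that `f ≤ g` a.s.
and `g ∈ C` imply `f = g` a.s. -/
def maxSet (P : Measure Ω) (C : Set (Ω →ₘ[P] ℝ)) : Set (Ω →ₘ[P] ℝ) :=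
  {f | f ∈ C ∧ ∀ g ∈ C, f ≤ g → f = g}

/-- `C` is max-closed if every maximal element of its closure already belongs to `C`. -/
def MaxClosed (P : Measure Ω) (C : Set (Ω →ₘ[P] ℝ)) : Prop :=
  maxSet P (closure0 P C) ⊆ C

/-- The pairing `⟨μ, f⟩ = ∫ f dμ ∈ [0, ∞]` between a nonnegative measure `μ` and `f ∈ L⁰₊`. -/
def pairing {P : Measure Ω} (μ : Measure Ω) (f : Ω →ₘ[P] ℝ) : ENNReal :=
  ∫⁻ ω, ENNReal.ofReal (f ω) ∂μ

/-- The set `C^osp` of outer support points of `C ⊆ L⁰₊`: points `g ∈ C^max` for which there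
is a σ-finite nonnegative measure `μ ≪ P` with `0 < sup_{f ∈ C} ⟨μ, f⟩ = ⟨μ, g⟩ < ∞`;
by convention `{0}^osp = {0}`. -/
def osp (P : Measure Ω) (C : Set (Ω →ₘ[P] ℝ)) : Set (Ω →ₘ[P] ℝ) :=
  {g | g ∈ maxSet P C ∧
    (C = {0} ∨ ∃ μ : Measure Ω, μ ≪ P ∧ SigmaFinite μ ∧
      0 < pairing μ g ∧ pairing μ g < ⊤ ∧ (⨆ f ∈ C, pairing μ f) = pairing μ g)}

/-- The solid hull of `C ⊆ L⁰₊`. -/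
def solidHull (P : Measure Ω) (C : Set (Ω →ₘ[P] ℝ)) : Set (Ω →ₘ[P] ℝ) :=
  {f | f ∈ L0plus P ∧ ∃ g ∈ C, f ≤ g}

/-- A set `S ⊆ L⁰₊` is solid if `g ∈ S` and `0 ≤ f ≤ g` imply `f ∈ S`. -/
def Solid (P : Measure Ω) (S : Set (Ω →ₘ[P] ℝ)) : Prop :=
  ∀ g ∈ S, ∀ f : Ω →ₘ[P] ℝ, 0 ≤ f → f ≤ g → f ∈ S

/-- `(g n)` is a sequence of forward convex combinations of `(f n)`. -/
def ForwardConvexComb (P : Measure Ω) (f g : ℕ → Ω →ₘ[P] ℝ) : Prop :=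
  ∀ n : ℕ, g n ∈ convexHull ℝ (f '' Set.Ici n)

end

noncomputable section

/-- The "nonnegative part in `[0,∞]`" of an extended real number
(`⊤ ↦ ⊤`, `x ↦ max x 0` for `x` real, `⊥ ↦ 0`). -/
def erealPosPart (x : EReal) : ENNReal :=
  if x = ⊤ then ⊤ else ENNReal.ofReal (max x 0).toReal

variable {Ω : Type*} [MeasurableSpace Ω]

/-- The utility random field extended to `x = 0` (and junk nonpositive values) by its
limiting value `U0 ω = lim_{x ↓ 0} U(ω, x) ∈ [-∞, ∞)`. -/
def Ufield (U : Ω → ℝ → ℝ) (U0 : Ω → EReal) (ω : Ω) (x : ℝ) : EReal :=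
  if 0 < x then (U ω x : EReal) else U0 ω

/-- The expected utility functional `𝕌(f) = E_P[U(f)] ∈ [-∞, ∞)`, defined as the
difference of the integrals of the positive and negative parts of `U(f)`. -/
def EU (P : Measure Ω) (U : Ω → ℝ → ℝ) (U0 : Ω → EReal) (f : Ω →ₘ[P] ℝ) : EReal :=
  ((∫⁻ ω, erealPosPart (Ufield U U0 ω (f ω)) ∂P : ENNReal) : EReal)
    - ((∫⁻ ω, erealPosPart (-(Ufield U U0 ω (f ω))) ∂P : ENNReal) : EReal)

/-- The measure `dμ = U'(g) dP`, where `U'(g)(ω) = U'(ω, g(ω))` for `g(ω) > 0` and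
`U'(g)(ω) = U'(ω, 0) = lim_{x ↓ 0} U'(ω, x) ∈ [0, ∞]` when `g(ω) = 0`. -/
def muOf (P : Measure Ω) (U' : Ω → ℝ → ℝ) (U'0 : Ω → ENNReal) (g : Ω →ₘ[P] ℝ) :
    Measure Ω :=
  P.withDensity (fun ω => if 0 < g ω then ENNReal.ofReal (U' ω (g ω)) else U'0 ω)

end


noncomputable section

namespace St17

open MeasureTheory Filter Set Topology

/-! ### Elementary facts about `erealPosPart` -/

lemma ofReal_max_zero (r : ℝ) : ENNReal.ofReal (max r 0) = ENNReal.ofReal r := by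
  rcases le_total r 0 with h | h
  · rw [max_eq_right h, ENNReal.ofReal_zero, ENNReal.ofReal_of_nonpos h]
  · rw [max_eq_left h]

lemma pp_coe (r : ℝ) : erealPosPart (r : EReal) = ENNReal.ofReal r := by
  rw [erealPosPart, if_neg (EReal.coe_ne_top r)]
  have : (max (r : EReal) 0 : EReal) = ((max r 0 : ℝ) : EReal) := by
    rcases le_total r 0 with h | h
    · rw [max_eq_right h, max_eq_right (by exact_mod_cast h)]; rfl
    · rw [max_eq_left h, max_eq_left (by exact_mod_cast h)]
  rw [this, EReal.toReal_coe, ofReal_max_zero]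

lemma pp_neg_coe (r : ℝ) : erealPosPart (-(r : EReal)) = ENNReal.ofReal (-r) := by
  rw [← EReal.coe_neg, pp_coe]

@[simp] lemma pp_bot : erealPosPart ⊥ = 0 := by
  rw [erealPosPart, if_neg (by simp)]
  simp

@[simp] lemma pp_top : erealPosPart ⊤ = ⊤ := if_pos rfl

lemma pp_mono {x y : EReal} (h : x ≤ y) : erealPosPart x ≤ erealPosPart y := by
  induction x with
  | bot => simp
  | coe a =>
    induction y with
    | bot => exact absurd h (by simp)
    | coe b => rw [pp_coe, pp_coe]; exact ENNReal.ofReal_le_ofReal (by exact_mod_cast h)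
    | top => simp
  | top => rw [top_le_iff.1 h]

lemma pp_toReal_sub {r : ℝ} :
    (erealPosPart (r : EReal)).toReal - (erealPosPart (-(r : EReal))).toReal = r := by
  rw [pp_coe, pp_neg_coe]
  rcases le_total r 0 with h | h
  · rw [ENNReal.ofReal_of_nonpos h, ENNReal.toReal_ofReal (neg_nonneg.mpr h)]; simp
  · rw [ENNReal.ofReal_of_nonpos (neg_nonpos.mpr h), ENNReal.toReal_ofReal h]; simp

lemma ofReal_identity (a b : ℝ) :
    ENNReal.ofReal (a - b) + ENNReal.ofReal b + ENNReal.ofReal (-a)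
      = ENNReal.ofReal (b - a) + ENNReal.ofReal a + ENNReal.ofReal (-b) := by
  simp only [ENNReal.ofReal, ← ENNReal.coe_add, ENNReal.coe_inj]
  rw [← NNReal.coe_inj]
  push_cast [Real.coe_toNNReal']
  rcases le_total a b with h | h <;> rcases le_total a 0 with h1 | h1 <;>
    rcases le_total b 0 with h2 | h2 <;> simp [max_def] <;> split_ifs <;> linarith

lemma ereal_sub_ne_bot_of {A B : ENNReal} (h : (A : EReal) - B ≠ ⊥) : B ≠ ⊤ := by
  intro hB
  apply h
  rw [hB, sub_eq_add_neg]
  simp only [EReal.coe_ennreal_top, EReal.neg_top, EReal.add_bot]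

lemma ereal_sub_extract {A B : ENNReal} (h1 : (A : EReal) - B ≠ ⊥) (h2 : (A : EReal) - B ≠ ⊤) :
    A ≠ ⊤ ∧ B ≠ ⊤ := by
  have hB : B ≠ ⊤ := ereal_sub_ne_bot_of h1
  refine ⟨?_, hB⟩
  intro hA
  apply h2
  rw [hA, sub_eq_add_neg, EReal.coe_ennreal_top, EReal.top_add_of_ne_bot]
  intro hc
  rw [EReal.neg_eq_bot_iff, EReal.coe_ennreal_eq_top_iff] at hc
  exact hB hc

lemma coe_ennreal_sub_finite {A B : ENNReal} (hA : A ≠ ⊤) (hB : B ≠ ⊤) :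
    (A : EReal) - B = ((A.toReal - B.toReal : ℝ) : EReal) := by
  lift A to NNReal using hA
  lift B to NNReal using hB
  rw [EReal.coe_nnreal_eq_coe_real, EReal.coe_nnreal_eq_coe_real, ← EReal.coe_sub]
  norm_num

lemma tendsto_ofReal_posPart {α : Type*} {l : Filter α} {u : α → ℝ} {L : EReal}
    (h : Tendsto (fun n => (u n : EReal)) l (𝓝 L)) :
    Tendsto (fun n => ENNReal.ofReal (u n)) l (𝓝 (erealPosPart L)) := by
  induction L with
  | bot =>
    rw [pp_bot]
    have hev : ∀ᶠ n in l, u n < 0 := by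
      filter_upwards [(EReal.tendsto_nhds_bot_iff_real.1 h) 0] with n hn
      exact_mod_cast hn
    refine Tendsto.congr' ?_ tendsto_const_nhds
    filter_upwards [hev] with n hn
    exact (ENNReal.ofReal_of_nonpos hn.le).symm
  | coe r =>
    rw [pp_coe]
    rw [EReal.tendsto_coe] at h
    exact (ENNReal.continuous_ofReal.tendsto r).comp h
  | top =>
    rw [pp_top, ENNReal.tendsto_nhds_top_iff_nat]
    intro m
    filter_upwards [(EReal.tendsto_nhds_top_iff_real.1 h) m] with n hn
    have hmn : (m : ℝ) < u n := by exact_mod_cast hn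
    rw [← ENNReal.ofReal_natCast m]
    exact (ENNReal.ofReal_lt_ofReal_iff ((Nat.cast_nonneg m).trans_lt hmn)).mpr hmn

/-! ### Concavity facts -/

section Grad

variable {u u' : ℝ → ℝ}

lemma grad_ineq (hconc : ConcaveOn ℝ (Set.Ioi 0) u)
    (hderiv : ∀ x ∈ Set.Ioi (0:ℝ), HasDerivAt u (u' x) x)
    {x y : ℝ} (hx : 0 < x) (hy : 0 < y) : u y ≤ u x + u' x * (y - x) := by
  rcases lt_trichotomy x y with hxy | rfl | hxy
  · have := hconc.slope_le_of_hasDerivAt hx hy hxy (hderiv x hx)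
    rw [slope_def_field, div_le_iff₀ (by linarith)] at this
    linarith
  · simp
  · have := hconc.le_slope_of_hasDerivAt hy hx hxy (hderiv x hx)
    rw [slope_def_field, le_div_iff₀ (by linarith)] at this
    linarith

lemma deriv_nonneg_of (hmono : MonotoneOn u (Set.Ioi 0))
    (hconc : ConcaveOn ℝ (Set.Ioi 0) u)
    (hderiv : ∀ x ∈ Set.Ioi (0:ℝ), HasDerivAt u (u' x) x)
    {x : ℝ} (hx : 0 < x) : 0 ≤ u' x := by
  have h1 : u x ≤ u (x + 1) := hmono hx (Set.mem_Ioi.mpr (by linarith)) (by linarith)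
  have := hconc.slope_le_of_hasDerivAt hx (Set.mem_Ioi.mpr (by linarith) : x + 1 ∈ Set.Ioi 0)
    (by linarith) (hderiv x hx)
  rw [slope_def_field] at this
  have h2 : (u (x+1) - u x) / (x + 1 - x) = u (x+1) - u x := by norm_num
  rw [h2] at this
  linarith

lemma deriv_anti_of (hconc : ConcaveOn ℝ (Set.Ioi 0) u)
    (hderiv : ∀ x ∈ Set.Ioi (0:ℝ), HasDerivAt u (u' x) x)
    {x y : ℝ} (hx : 0 < x) (hy : 0 < y) (hxy : x ≤ y) : u' y ≤ u' x := by
  have h1 := grad_ineq hconc hderiv hx hy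
  have h2 := grad_ineq hconc hderiv hy hx
  rcases eq_or_lt_of_le hxy with rfl | hlt
  · exact le_refl _
  · by_contra hcon
    push_neg at hcon
    nlinarith

end Grad

/-! ### Measurability helpers -/

lemma aemeasurable_ite_pos {Ω β : Type*} [MeasurableSpace Ω] [MeasurableSpace β] {P : Measure Ω}
    {v : Ω → ℝ} (hv : AEMeasurable v P) {p q : Ω → β} (hp : AEMeasurable p P)
    (hq : AEMeasurable q P) :
    AEMeasurable (fun ω => if 0 < v ω then p ω else q ω) P := by
  refine ⟨fun ω => if 0 < hv.mk v ω then hp.mk p ω else hq.mk q ω,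
    Measurable.ite (measurableSet_lt measurable_const hv.measurable_mk) hp.measurable_mk
      hq.measurable_mk, ?_⟩
  filter_upwards [hv.ae_eq_mk, hp.ae_eq_mk, hq.ae_eq_mk] with ω h1 h2 h3
  rw [← h1, ← h2, ← h3]

lemma aemeasurable_comp_pos {Ω : Type*} [MeasurableSpace Ω] {P : Measure Ω}
    {V : Ω → ℝ → ℝ} (hVm : ∀ x : ℝ, 0 < x → AEMeasurable (fun ω => V ω x) P)
    (hVc : ∀ ω, ContinuousOn (V ω) (Set.Ioi 0))
    {v : Ω → ℝ} (hv : AEMeasurable v P) :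
    AEMeasurable (fun ω => if 0 < v ω then V ω (v ω) else 0) P := by
  set q : ℕ → Ω → ℝ := fun n ω => (⌈v ω * 2 ^ n⌉ : ℤ) / 2 ^ n with hqdef
  have hqpos : ∀ (n : ℕ) ω, v ω ≤ q n ω := by
    intro n ω
    rw [hqdef]
    dsimp only
    rw [le_div_iff₀ (by positivity)]
    exact Int.le_ceil _
  have hqlt : ∀ (n : ℕ) ω, q n ω < v ω + (2 ^ n)⁻¹ := by
    intro n ω
    rw [hqdef]
    dsimp only
    rw [div_lt_iff₀ (by positivity)]
    calc (⌈v ω * 2 ^ n⌉ : ℝ) < v ω * 2 ^ n + 1 := Int.ceil_lt_add_one _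
    _ = (v ω + ((2:ℝ) ^ n)⁻¹) * 2 ^ n := by field_simp
  have hWm : ∀ n : ℕ, AEMeasurable (fun ω => if 0 < v ω then V ω (q n ω) else 0) P := by
    intro n
    have hEx : ∀ k : ℤ, ∃ e : Ω → ℝ, Measurable e ∧
        (0 < (k : ℝ) / 2 ^ n → ∀ᵐ ω ∂P, e ω = V ω ((k : ℝ) / 2 ^ n)) := by
      intro k
      by_cases hk : 0 < (k : ℝ) / 2 ^ n
      · obtain ⟨e, he, hee⟩ := hVm _ hk
        exact ⟨e, he, fun _ => hee.symm⟩
      · exact ⟨0, measurable_const, fun h => absurd h hk⟩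
    choose E hEm hEe using hEx
    have hall : ∀ᵐ ω ∂P, ∀ k : ℤ, 0 < (k : ℝ) / 2 ^ n → E k ω = V ω ((k : ℝ) / 2 ^ n) := by
      rw [ae_all_iff]
      intro k
      by_cases hk : 0 < (k : ℝ) / 2 ^ n
      · filter_upwards [hEe k hk] with ω h _
        exact h
      · filter_upwards with ω h
        exact absurd h hk
    refine ⟨fun ω => if 0 < hv.mk v ω then E ⌈hv.mk v ω * 2 ^ n⌉ ω else 0, ?_, ?_⟩
    · have hc : Measurable fun ω => (⌈hv.mk v ω * 2 ^ n⌉ : ℤ) :=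
        (hv.measurable_mk.mul measurable_const).ceil
      have huncurry : Measurable fun p : Ω × ℤ => E p.2 p.1 :=
        measurable_from_prod_countable_left fun k => hEm k
      exact Measurable.ite (measurableSet_lt measurable_const hv.measurable_mk)
        (huncurry.comp (measurable_id.prodMk hc)) measurable_const
    · filter_upwards [hv.ae_eq_mk, hall] with ω h1 h2
      by_cases hpos : 0 < v ω
      · rw [if_pos hpos, if_pos (h1 ▸ hpos), ← h1]
        have hqp : 0 < (⌈v ω * 2 ^ n⌉ : ℝ) / 2 ^ n := lt_of_lt_of_le hpos (hqpos n ω)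
        exact (h2 _ hqp).symm
      · rw [if_neg hpos, if_neg (h1 ▸ hpos)]
  have htend : ∀ ω, Tendsto (fun n => if 0 < v ω then V ω (q n ω) else 0) atTop
      (𝓝 (if 0 < v ω then V ω (v ω) else 0)) := by
    intro ω
    by_cases hpos : 0 < v ω
    · simp only [if_pos hpos]
      have hq2 : Tendsto (fun n => q n ω) atTop (𝓝 (v ω)) := by
        have h1 : Tendsto (fun n : ℕ => v ω + ((2:ℝ) ^ n)⁻¹) atTop (𝓝 (v ω)) := by
          have h2 : Tendsto (fun n : ℕ => ((2:ℝ) ^ n)⁻¹) atTop (𝓝 0) :=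
            tendsto_inv_atTop_zero.comp
              (tendsto_pow_atTop_atTop_of_one_lt (by norm_num : (1:ℝ) < 2))
          simpa using tendsto_const_nhds.add h2
        exact tendsto_of_tendsto_of_tendsto_of_le_of_le tendsto_const_nhds h1
          (fun n => hqpos n ω) (fun n => (hqlt n ω).le)
      have hcont : ContinuousAt (V ω) (v ω) := (hVc ω).continuousAt (Ioi_mem_nhds hpos)
      exact hcont.tendsto.comp hq2
    · simp only [if_neg hpos]
      exact tendsto_const_nhds
  exact aemeasurable_of_tendsto_metrizable_ae' hWm (Eventually.of_forall htend)

end St17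

end

set_option maxHeartbeats 3000000 in
open Topology ENNReal in
/-- utility maximization and outer support points.
Let `U` be a utility random field with derivative field `U'`, extended values
`U0 = U(·, 0⁺) ∈ [-∞, ∞)`, `U'0 = U'(·, 0⁺) ∈ [0, ∞]`, `Uinf = U(·, ∞)`, and with
`E_P[0 ∨ U(∞)] < ∞`. Let `C ⊆ L⁰₊` be convex, max-closed and bounded, containing some `h`
with `P[h = 0] = 0`, and let `g ∈ C^max` be an optimizer of `𝕌 = E_P[U(·)]` over `C` with
`sup_{f ∈ C} 𝕌(f) < ∞`, `𝕌(n⁻¹ g) > -∞` for all `n ∈ ℕ`, and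
`P[g > 0, U(g) < U(∞)] > 0`. Then `g` is an outer support point of `C`; in fact the
σ-finite measure `μ` with `dμ = U'(g) dP` satisfies
`0 < sup_{f ∈ C} ∫ f dμ = ∫ g dμ < ∞`. -/
theorem statement17 {Ω : Type*} [MeasurableSpace Ω] (P : Measure Ω) [IsProbabilityMeasure P]
    (U U' : Ω → ℝ → ℝ) (U0 Uinf : Ω → EReal) (U'0 : Ω → ENNReal)
    -- `U(·, x)` is a random variable for every `x ∈ (0, ∞)`:
    (hUmeas : ∀ x : ℝ, 0 < x → AEMeasurable (fun ω => U ω x) P)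
    -- for each `ω`, `U(ω, ·)` is nondecreasing, concave and continuously differentiable
    -- on `(0, ∞)`, with derivative `U'(ω, ·)`:
    (hUmono : ∀ ω, MonotoneOn (U ω) (Set.Ioi 0))
    (hUconc : ∀ ω, ConcaveOn ℝ (Set.Ioi 0) (U ω))
    (hUderiv : ∀ ω, ∀ x ∈ Set.Ioi (0:ℝ), HasDerivAt (U ω) (U' ω x) x)
    (hU'cont : ∀ ω, ContinuousOn (U' ω) (Set.Ioi 0))
    -- extensions by continuity: `U(·, 0)`, `U'(·, 0)` and `U(∞)`:
    (hU0 : ∀ ω, Tendsto (fun x => (U ω x : EReal)) (nhdsWithin 0 (Set.Ioi 0)) (nhds (U0 ω)))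
    (hU'0 : ∀ ω, Tendsto (fun x => (ENNReal.ofReal (U' ω x)))
      (nhdsWithin 0 (Set.Ioi 0)) (nhds (U'0 ω)))
    (hUinf : ∀ ω, Tendsto (fun x => (U ω x : EReal)) atTop (nhds (Uinf ω)))
    -- `E_P[0 ∨ U(∞)] < ∞`:
    (hUinfInt : ∫⁻ ω, erealPosPart (Uinf ω) ∂P < ⊤)
    -- `C ⊆ L⁰₊` convex, max-closed and bounded, containing some `h` with `P[h = 0] = 0`:
    (C : Set (Ω →ₘ[P] ℝ)) (hCL0 : C ⊆ L0plus P)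
    (hconv : Convex ℝ C) (hmaxcl : MaxClosed P C) (hbdd : Bounded0 P C)
    (h : Ω →ₘ[P] ℝ) (hhC : h ∈ C) (hhpos : ∀ᵐ ω ∂P, h ω ≠ 0)
    -- `g ∈ C^max` is an optimizer of `𝕌` over `C`, with `sup_{f ∈ C} 𝕌(f) < ∞`:
    (g : Ω →ₘ[P] ℝ) (hgmax : g ∈ maxSet P C)
    (hgopt : (⨆ f ∈ C, EU P U U0 f) = EU P U U0 g) (hgfin : EU P U U0 g < ⊤)
    -- `𝕌(n⁻¹ g) > -∞` for all `n ∈ ℕ`: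
    (hgbelow : ∀ n : ℕ, 0 < n → ⊥ < EU P U U0 ((n : ℝ)⁻¹ • g))
    -- `P[g > 0, U(g) < U(∞)] > 0`:
    (hnondeg : 0 < P {ω | 0 < g ω ∧ Ufield U U0 ω (g ω) < Uinf ω}) :
    g ∈ osp P C ∧
      muOf P U' U'0 g ≪ P ∧ SigmaFinite (muOf P U' U'0 g) ∧
      0 < pairing (muOf P U' U'0 g) g ∧ pairing (muOf P U' U'0 g) g < ⊤ ∧
      (⨆ f ∈ C, pairing (muOf P U' U'0 g) f) = pairing (muOf P U' U'0 g) g := by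
  classical
  obtain ⟨hgC, hgmaxmax⟩ := hgmax
  have hGm : AEMeasurable (⇑g) P := g.aemeasurable
  have hUcont : ∀ ω, ContinuousOn (U ω) (Set.Ioi 0) :=
    fun ω x hx => ((hUderiv ω x hx).continuousAt).continuousWithinAt
  have hUf_pos : ∀ ω (x : ℝ), 0 < x → Ufield U U0 ω x = ((U ω x : ℝ) : EReal) :=
    fun ω x hx => by unfold Ufield; rw [if_pos hx]
  have hUf_nonpos : ∀ ω (x : ℝ), ¬ (0 < x) → Ufield U U0 ω x = U0 ω :=
    fun ω x hx => by unfold Ufield; rw [if_neg hx]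
  have hseq0 : Tendsto (fun n : ℕ => ((n : ℝ) + 1)⁻¹) atTop (𝓝[>] (0:ℝ)) := by
    refine tendsto_nhdsWithin_of_tendsto_nhds_of_eventually_within _ ?_
      (Eventually.of_forall fun n => Set.mem_Ioi.2 (by positivity))
    simpa [one_div] using tendsto_one_div_add_atTop_nhds_zero_nat (𝕜 := ℝ)
  have hnonneg : ∀ f' : Ω →ₘ[P] ℝ, f' ∈ C → ∀ᵐ ω ∂P, 0 ≤ f' ω := by
    intro f' hf'
    have h1 : ((0 : Ω →ₘ[P] ℝ) : Ω → ℝ) ≤ᵐ[P] ⇑f' := AEEqFun.coeFn_le.2 (hCL0 hf')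
    filter_upwards [h1, AEEqFun.coeFn_zero (β := ℝ) (μ := P)] with ω h2 h3
    rw [h3] at h2
    exact h2
  have hg0 : ∀ᵐ ω ∂P, 0 ≤ g ω := hnonneg g hgC
  -- measurability of the sections of U'
  have hU'sec : ∀ x : ℝ, 0 < x → AEMeasurable (fun ω => U' ω x) P := by
    intro x hx
    have htend : ∀ ω, Tendsto
        (fun n : ℕ => (U ω (x + ((n:ℝ)+1)⁻¹) - U ω x) / ((x + ((n:ℝ)+1)⁻¹) - x))
        atTop (𝓝 (U' ω x)) := by
      intro ω
      have hder := hasDerivAt_iff_tendsto_slope.1 (hUderiv ω x hx)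
      have hxs : Tendsto (fun n : ℕ => x + ((n:ℝ)+1)⁻¹) atTop (𝓝[≠] x) := by
        refine tendsto_nhdsWithin_of_tendsto_nhds_of_eventually_within _ ?_
          (Eventually.of_forall fun n => ?_)
        · simpa using tendsto_const_nhds.add (hseq0.mono_right nhdsWithin_le_nhds)
        · have h1 : (0:ℝ) < ((n:ℝ)+1)⁻¹ := by positivity
          simp only [Set.mem_compl_iff, Set.mem_singleton_iff]
          intro hc
          nlinarith [hc]
      have hcomp := hder.comp hxs
      refine hcomp.congr fun n => ?_
      rw [Function.comp_apply, slope_def_field]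
    refine aemeasurable_of_tendsto_metrizable_ae' (fun n => ?_) (Eventually.of_forall htend)
    exact ((hUmeas _ (by positivity)).sub (hUmeas x hx)).div_const _
  have hU'0m : AEMeasurable U'0 P := by
    have htend : ∀ ω, Tendsto (fun n : ℕ => ENNReal.ofReal (U' ω (((n:ℝ)+1)⁻¹))) atTop
        (𝓝 (U'0 ω)) := fun ω => (hU'0 ω).comp hseq0
    exact aemeasurable_of_tendsto_metrizable_ae'
      (fun n => ENNReal.measurable_ofReal.comp_aemeasurable (hU'sec _ (by positivity)))
      (Eventually.of_forall htend)
  set dens : Ω → ENNReal := fun ω => if 0 < g ω then ENNReal.ofReal (U' ω (g ω)) else U'0 ω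
    with hdensdef
  have hmuOf : muOf P U' U'0 g = P.withDensity dens := by
    unfold muOf
    rw [hdensdef]
  have hdensm : AEMeasurable dens P := by
    have h1 : AEMeasurable (fun ω => if 0 < g ω then U' ω (g ω) else 0) P :=
      St17.aemeasurable_comp_pos hU'sec hU'cont hGm
    refine (St17.aemeasurable_ite_pos hGm (ENNReal.measurable_ofReal.comp_aemeasurable h1)
      hU'0m).congr (Eventually.of_forall fun ω => ?_)
    rw [hdensdef]
    by_cases hh : 0 < g ω <;> simp [hh]
  -- measurability of the positive and negative parts
  have hmeasPN : ∀ v : Ω → ℝ, AEMeasurable v P →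
      AEMeasurable (fun ω => erealPosPart (Ufield U U0 ω (v ω))) P ∧
      AEMeasurable (fun ω => erealPosPart (-Ufield U U0 ω (v ω))) P := by
    intro v hv
    have hY : AEMeasurable (fun ω => if 0 < v ω then U ω (v ω) else 0) P :=
      St17.aemeasurable_comp_pos hUmeas hUcont hv
    have hp0 : AEMeasurable (fun ω => erealPosPart (U0 ω)) P := by
      refine aemeasurable_of_tendsto_metrizable_ae'
        (f := fun (n : ℕ) ω => ENNReal.ofReal (U ω (((n:ℝ)+1)⁻¹)))
        (fun n => ENNReal.measurable_ofReal.comp_aemeasurable (hUmeas _ (by positivity)))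
        (Eventually.of_forall fun ω => ?_)
      exact St17.tendsto_ofReal_posPart ((hU0 ω).comp hseq0)
    have hn0 : AEMeasurable (fun ω => erealPosPart (-U0 ω)) P := by
      refine aemeasurable_of_tendsto_metrizable_ae'
        (f := fun (n : ℕ) ω => ENNReal.ofReal (-(U ω (((n:ℝ)+1)⁻¹))))
        (fun n => ENNReal.measurable_ofReal.comp_aemeasurable (hUmeas _ (by positivity)).neg)
        (Eventually.of_forall fun ω => ?_)
      refine St17.tendsto_ofReal_posPart ?_
      refine (((hU0 ω).comp hseq0).neg).congr fun n => ?_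
      simp [Function.comp]
    constructor
    · refine (St17.aemeasurable_ite_pos hv (ENNReal.measurable_ofReal.comp_aemeasurable hY)
        hp0).congr (Eventually.of_forall fun ω => ?_)
      by_cases hh : 0 < v ω
      · simp only [Function.comp_apply, if_pos hh, hUf_pos ω (v ω) hh, St17.pp_coe]
      · simp only [Function.comp_apply, if_neg hh, hUf_nonpos ω (v ω) hh]
    · refine (St17.aemeasurable_ite_pos hv
        (ENNReal.measurable_ofReal.comp_aemeasurable hY.neg) hn0).congr
        (Eventually.of_forall fun ω => ?_)
      by_cases hh : 0 < v ω
      · simp only [Function.comp_apply, if_pos hh, Pi.neg_apply, hUf_pos ω (v ω) hh,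
          St17.pp_neg_coe]
      · simp only [Function.comp_apply, if_neg hh, Pi.neg_apply, hUf_nonpos ω (v ω) hh]
  -- rewriting EU through a.e. representatives
  have hEU_eq : ∀ (w : Ω →ₘ[P] ℝ) (v : Ω → ℝ), ⇑w =ᵐ[P] v →
      EU P U U0 w = ((∫⁻ ω, erealPosPart (Ufield U U0 ω (v ω)) ∂P : ℝ≥0∞) : EReal)
        - ((∫⁻ ω, erealPosPart (-Ufield U U0 ω (v ω)) ∂P : ℝ≥0∞) : EReal) := by
    intro w v hwv
    have h1 : ∫⁻ ω, erealPosPart (Ufield U U0 ω (w ω)) ∂P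
        = ∫⁻ ω, erealPosPart (Ufield U U0 ω (v ω)) ∂P :=
      lintegral_congr_ae (hwv.mono fun ω hω => by simp only [hω])
    have h2 : ∫⁻ ω, erealPosPart (-Ufield U U0 ω (w ω)) ∂P
        = ∫⁻ ω, erealPosPart (-Ufield U U0 ω (v ω)) ∂P :=
      lintegral_congr_ae (hwv.mono fun ω hω => by simp only [hω])
    simp only [EU]
    rw [h1, h2]
  -- Ufield is dominated by Uinf and never ⊤
  have hUleU1 : ∀ ω, U0 ω ≤ ((U ω 1 : ℝ) : EReal) := by
    intro ω
    refine le_of_tendsto (hU0 ω) ?_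
    filter_upwards [Ioo_mem_nhdsGT_of_mem (Set.left_mem_Ico.2 zero_lt_one)] with x hx
    exact EReal.coe_le_coe_iff.2 (hUmono ω hx.1 (Set.mem_Ioi.2 zero_lt_one) hx.2.le)
  have hcoe_le_Uinf : ∀ ω (x : ℝ), 0 < x → ((U ω x : ℝ) : EReal) ≤ Uinf ω := by
    intro ω x hx
    refine ge_of_tendsto (hUinf ω) ?_
    filter_upwards [eventually_ge_atTop x] with y hy
    exact EReal.coe_le_coe_iff.2 (hUmono ω (Set.mem_Ioi.2 hx) (Set.mem_Ioi.2 (hx.trans_le hy)) hy)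
  have hUfle : ∀ ω (x : ℝ), Ufield U U0 ω x ≤ Uinf ω := by
    intro ω x
    by_cases hh : 0 < x
    · rw [hUf_pos ω x hh]
      exact hcoe_le_Uinf ω x hh
    · rw [hUf_nonpos ω x hh]
      exact (hUleU1 ω).trans (hcoe_le_Uinf ω 1 one_pos)
  have hUf_ne_top : ∀ ω (x : ℝ), Ufield U U0 ω x ≠ ⊤ := by
    intro ω x
    by_cases hh : 0 < x
    · rw [hUf_pos ω x hh]
      exact EReal.coe_ne_top _
    · rw [hUf_nonpos ω x hh]
      exact ne_top_of_le_ne_top (EReal.coe_ne_top _) (hUleU1 ω)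
  have hPP_lt : ∀ v : Ω → ℝ, ∫⁻ ω, erealPosPart (Ufield U U0 ω (v ω)) ∂P < ⊤ :=
    fun v => lt_of_le_of_lt (lintegral_mono fun ω => St17.pp_mono (hUfle ω (v ω))) hUinfInt
  -- finiteness of the parts of EU g
  have hEUg_ne_bot : EU P U U0 g ≠ ⊥ := by
    have hb := hgbelow 1 one_pos
    have h1 : ((1:ℕ):ℝ)⁻¹ • g = g := by norm_num
    rw [h1] at hb
    exact hb.ne'
  have hNg_ne_top : ∫⁻ ω, erealPosPart (-Ufield U U0 ω (g ω)) ∂P ≠ ⊤ :=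
    St17.ereal_sub_ne_bot_of hEUg_ne_bot
  have hsmul_coe : ∀ c : ℝ, ⇑(c • g) =ᵐ[P] fun ω => c * g ω := by
    intro c
    filter_upwards [AEEqFun.coeFn_smul c g] with ω hω
    rw [hω]
    simp [smul_eq_mul]
  have hNneg_smul : ∀ m : ℕ, 0 < m →
      (∫⁻ ω, erealPosPart (-Ufield U U0 ω (((m:ℝ))⁻¹ * g ω)) ∂P) ≠ ⊤ := by
    intro m hm
    have hb := hgbelow m hm
    rw [hEU_eq _ _ (hsmul_coe ((m:ℝ))⁻¹)] at hb
    exact St17.ereal_sub_ne_bot_of hb.ne'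
  have hN2' : (∫⁻ ω, erealPosPart (-Ufield U U0 ω (1/2 * g ω)) ∂P) ≠ ⊤ := by
    have hb := hNneg_smul 2 (by norm_num)
    have hc : ((2:ℕ):ℝ)⁻¹ = 1/2 := by norm_num
    rwa [hc] at hb
  have hN4' : (∫⁻ ω, erealPosPart (-Ufield U U0 ω (2⁻¹/2 * g ω)) ∂P) ≠ ⊤ := by
    have hb := hNneg_smul 4 (by norm_num)
    have hc : ((4:ℕ):ℝ)⁻¹ = 2⁻¹/2 := by norm_num
    rwa [hc] at hb
  -- a.e. realness of U(g)
  have hgreal : ∀ᵐ ω ∂P, ∃ r : ℝ, Ufield U U0 ω (g ω) = (r : EReal) := by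
    have h1 : ∀ᵐ ω ∂P, erealPosPart (-Ufield U U0 ω (g ω)) < ⊤ :=
      ae_lt_top' (hmeasPN _ hGm).2 hNg_ne_top
    filter_upwards [h1] with ω hω
    by_cases hb : Ufield U U0 ω (g ω) = ⊥
    · rw [hb] at hω
      simp at hω
    · exact ⟨(Ufield U U0 ω (g ω)).toReal,
        (EReal.coe_toReal (hUf_ne_top ω (g ω)) hb).symm⟩
  -- gradient shortcuts
  have hU'nn : ∀ ω (x : ℝ), 0 < x → 0 ≤ U' ω x :=
    fun ω x hx => St17.deriv_nonneg_of (hUmono ω) (hUconc ω) (hUderiv ω) hx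
  have hgrad : ∀ ω (x y : ℝ), 0 < x → 0 < y → U ω y ≤ U ω x + U' ω x * (y - x) :=
    fun ω x y hx hy => St17.grad_ineq (hUconc ω) (hUderiv ω) hx hy
  have hanti : ∀ ω (x y : ℝ), 0 < x → 0 < y → x ≤ y → U' ω y ≤ U' ω x :=
    fun ω x y hx hy hxy => St17.deriv_anti_of (hUconc ω) (hUderiv ω) hx hy hxy
  -- integrability of U'(c g) g
  have hgen_fin : ∀ c : ℝ, 0 < c →
      ((∫⁻ ω, erealPosPart (-Ufield U U0 ω (c/2 * g ω)) ∂P) ≠ ⊤) →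
      (∫⁻ ω, ENNReal.ofReal (if 0 < g ω then U' ω (c * g ω) * g ω else 0) ∂P) < ⊤ := by
    intro c hc hN
    have hpt : ∀ᵐ ω ∂P, ENNReal.ofReal (if 0 < g ω then U' ω (c * g ω) * g ω else 0)
        ≤ ENNReal.ofReal (2/c) * (erealPosPart (Ufield U U0 ω (c * g ω))
          + erealPosPart (-Ufield U U0 ω (c/2 * g ω))) := by
      filter_upwards [hg0] with ω h0
      by_cases hh : 0 < g ω
      · rw [if_pos hh]
        have hcg : 0 < c * g ω := by positivity
        have hcg2 : 0 < c/2 * g ω := by positivity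
        have hg1 := hgrad ω (c * g ω) (c/2 * g ω) hcg hcg2
        have hnn := hU'nn ω _ hcg
        have hkey : U' ω (c * g ω) * g ω ≤ (2/c) * (U ω (c * g ω) - U ω (c/2 * g ω)) := by
          have hc2 : c/2 * g ω - c * g ω = -(c/2 * g ω) := by ring
          rw [hc2] at hg1
          have h3 : U' ω (c * g ω) * (c/2 * g ω) ≤ U ω (c * g ω) - U ω (c/2 * g ω) := by
            linarith
          calc U' ω (c * g ω) * g ω = (2/c) * (U' ω (c * g ω) * (c/2 * g ω)) := by
                field_simp
            _ ≤ (2/c) * (U ω (c * g ω) - U ω (c/2 * g ω)) := by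
                have h4 : (0:ℝ) ≤ 2/c := by positivity
                nlinarith
        calc ENNReal.ofReal (U' ω (c * g ω) * g ω)
            ≤ ENNReal.ofReal ((2/c) * (U ω (c * g ω) - U ω (c/2 * g ω))) :=
              ENNReal.ofReal_le_ofReal hkey
          _ = ENNReal.ofReal (2/c) * ENNReal.ofReal (U ω (c * g ω) - U ω (c/2 * g ω)) :=
              ENNReal.ofReal_mul (by positivity)
          _ ≤ ENNReal.ofReal (2/c) * (ENNReal.ofReal (U ω (c * g ω))
              + ENNReal.ofReal (-(U ω (c/2 * g ω)))) := by
              gcongr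
              rw [sub_eq_add_neg]
              exact ENNReal.ofReal_add_le
          _ = _ := by
              rw [hUf_pos ω _ hcg, hUf_pos ω _ hcg2, St17.pp_coe, St17.pp_neg_coe]
      · rw [if_neg hh]
        simp
    have hmeas1 : AEMeasurable (fun ω => erealPosPart (Ufield U U0 ω (c * g ω))
        + erealPosPart (-Ufield U U0 ω (c/2 * g ω))) P :=
      ((hmeasPN _ (aemeasurable_const.mul hGm)).1).add
        ((hmeasPN _ (aemeasurable_const.mul hGm)).2)
    calc (∫⁻ ω, ENNReal.ofReal (if 0 < g ω then U' ω (c * g ω) * g ω else 0) ∂P)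
        ≤ ∫⁻ ω, ENNReal.ofReal (2/c) * (erealPosPart (Ufield U U0 ω (c * g ω))
            + erealPosPart (-Ufield U U0 ω (c/2 * g ω))) ∂P := lintegral_mono_ae hpt
      _ = ENNReal.ofReal (2/c) * ∫⁻ ω, (erealPosPart (Ufield U U0 ω (c * g ω))
            + erealPosPart (-Ufield U U0 ω (c/2 * g ω))) ∂P :=
          lintegral_const_mul'' _ hmeas1
      _ < ⊤ := by
          refine ENNReal.mul_lt_top ENNReal.ofReal_lt_top ?_
          rw [lintegral_add_left' (f := fun ω => erealPosPart (Ufield U U0 ω (c * g ω)))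
            (hmeasPN _ (aemeasurable_const.mul hGm)).1]
          exact ENNReal.add_lt_top.2 ⟨hPP_lt _, lt_top_iff_ne_top.2 hN⟩
  have hE1 : (∫⁻ ω, ENNReal.ofReal (if 0 < g ω then U' ω (g ω) * g ω else 0) ∂P) < ⊤ := by
    have hb := hgen_fin 1 one_pos hN2'
    have hc : ∀ ω : Ω, (1:ℝ) * g ω = g ω := fun ω => one_mul _
    simp only [hc] at hb
    exact hb
  have hE2 : (∫⁻ ω, ENNReal.ofReal (if 0 < g ω then U' ω (2⁻¹ * g ω) * g ω else 0) ∂P) < ⊤ :=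
    hgen_fin 2⁻¹ (by norm_num) hN4'
  -- THE KEY INEQUALITY
  have hOR : ∀ (w : Ω → ℝ), AEMeasurable w P →
      AEMeasurable (fun ω => ENNReal.ofReal (w ω)) P :=
    fun w hw => ENNReal.measurable_ofReal.comp_aemeasurable hw
  have key : ∀ f : Ω →ₘ[P] ℝ, f ∈ C →
      (∫⁻ ω, dens ω * ENNReal.ofReal (f ω) ∂P) ≤ ∫⁻ ω, dens ω * ENNReal.ofReal (g ω) ∂P := by
    intro f hfC
    have hFm : AEMeasurable (⇑f) P := f.aemeasurable
    have hF0 : ∀ᵐ ω ∂P, 0 ≤ f ω := hnonneg f hfC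
    set ε : ℕ → ℝ := fun n => ((n : ℝ) + 2)⁻¹ with hεdef
    have hε_pos : ∀ n, 0 < ε n := fun n => by rw [hεdef]; positivity
    have hε_le : ∀ n, ε n ≤ 2⁻¹ := by
      intro n
      rw [hεdef]
      refine inv_anti₀ (by norm_num) ?_
      have hn : (0:ℝ) ≤ (n:ℝ) := Nat.cast_nonneg n
      linarith
    have hε_lt1 : ∀ n, ε n < 1 := fun n => lt_of_le_of_lt (hε_le n) (by norm_num)
    set v : ℕ → Ω → ℝ := fun n ω => (1 - ε n) * g ω + ε n * f ω with hvdef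
    have hvm : ∀ n, AEMeasurable (v n) P := fun n =>
      (aemeasurable_const.mul hGm).add (aemeasurable_const.mul hFm)
    set d : ℕ → Ω → ℝ := fun n ω => if 0 < v n ω then U' ω (v n ω) else 0 with hddef
    have hdm : ∀ n, AEMeasurable (d n) P := fun n =>
      St17.aemeasurable_comp_pos hU'sec hU'cont (hvm n)
    have hfεC : ∀ n, (1 - ε n) • g + ε n • f ∈ C := fun n =>
      hconv hgC hfC (by linarith [hε_lt1 n]) (hε_pos n).le (by ring)
    have hcoe : ∀ n, ⇑((1 - ε n) • g + ε n • f) =ᵐ[P] v n := by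
      intro n
      filter_upwards [AEEqFun.coeFn_add ((1 - ε n) • g) (ε n • f),
        AEEqFun.coeFn_smul (1 - ε n) g, AEEqFun.coeFn_smul (ε n) f] with ω h1 h2 h3
      rw [h1, Pi.add_apply, h2, h3]
      simp [hvdef, smul_eq_mul]
    have hEUle : ∀ n, EU P U U0 ((1 - ε n) • g + ε n • f) ≤ EU P U U0 g := by
      intro n
      rw [← hgopt]
      exact le_biSup _ (hfεC n)
    have hvreal : ∀ n, ∀ᵐ ω ∂P, ∃ r : ℝ, Ufield U U0 ω (v n ω) = (r : EReal) := by
      intro n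
      filter_upwards [hgreal, hg0, hF0] with ω hrg h0g h0f
      obtain ⟨r, hr⟩ := hrg
      by_cases hv : 0 < v n ω
      · exact ⟨U ω (v n ω), hUf_pos ω _ hv⟩
      · refine ⟨r, ?_⟩
        rw [hUf_nonpos ω _ hv]
        have hgz : ¬ (0 < g ω) := by
          intro hgp
          apply hv
          simp only [hvdef]
          nlinarith [hε_lt1 n, hε_pos n]
        rw [hUf_nonpos ω _ hgz] at hr
        exact hr
    have htoReal_meas : ∀ w : Ω → ℝ, AEMeasurable w P →
        (∀ᵐ ω ∂P, ∃ r : ℝ, Ufield U U0 ω (w ω) = (r : EReal)) →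
        AEMeasurable (fun ω => (Ufield U U0 ω (w ω)).toReal) P := by
      intro w hw hreal
      refine ((ENNReal.measurable_toReal.comp_aemeasurable (hmeasPN w hw).1).sub
        (ENNReal.measurable_toReal.comp_aemeasurable (hmeasPN w hw).2)).congr ?_
      filter_upwards [hreal] with ω hω
      obtain ⟨r, hr⟩ := hω
      simp only [Pi.sub_apply, Function.comp_apply, hr, EReal.toReal_coe]
      exact St17.pp_toReal_sub
    have htb_m : AEMeasurable (fun ω => (Ufield U U0 ω (g ω)).toReal) P :=
      htoReal_meas _ hGm hgreal
    have hta_m : ∀ n, AEMeasurable (fun ω => (Ufield U U0 ω (v n ω)).toReal) P :=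
      fun n => htoReal_meas _ (hvm n) (hvreal n)
    -- step 1: the finite-ε inequality
    have hKn : ∀ n, (∫⁻ ω, ENNReal.ofReal (d n ω * f ω) ∂P)
        ≤ ∫⁻ ω, ENNReal.ofReal (d n ω * g ω) ∂P := by
      intro n
      set ta : Ω → ℝ := fun ω => (Ufield U U0 ω (v n ω)).toReal with htadef
      set tb : Ω → ℝ := fun ω => (Ufield U U0 ω (g ω)).toReal with htbdef
      have hR : ∀ᵐ ω ∂P, ENNReal.ofReal (ε n * (d n ω * f ω)) + ENNReal.ofReal (tb ω - ta ω)
          ≤ ENNReal.ofReal (ε n * (d n ω * g ω)) + ENNReal.ofReal (ta ω - tb ω) := by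
        filter_upwards [hg0, hF0, hgreal] with ω h0g h0f hrg
        obtain ⟨r, hr⟩ := hrg
        by_cases hv : 0 < v n ω
        · have hd_eq : d n ω = U' ω (v n ω) := by
            simp only [hddef]
            rw [if_pos hv]
          have hta_eq : ta ω = U ω (v n ω) := by
            simp only [htadef]
            rw [hUf_pos ω _ hv, EReal.toReal_coe]
          have hdnn : 0 ≤ d n ω := by rw [hd_eq]; exact hU'nn ω _ hv
          have hstar : ε n * (d n ω * (f ω - g ω)) ≤ ta ω - tb ω := by
            by_cases hgpos : 0 < g ω
            · have htb_eq : tb ω = U ω (g ω) := by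
                simp only [htbdef]
                rw [hUf_pos ω _ hgpos, EReal.toReal_coe]
              have h2 := hgrad ω (v n ω) (g ω) hv hgpos
              have hgv : g ω - v n ω = ε n * (g ω - f ω) := by simp only [hvdef]; ring
              rw [hgv] at h2
              rw [hta_eq, htb_eq, hd_eq]
              nlinarith [h2]
            · have hgz : g ω = 0 := le_antisymm (not_lt.1 hgpos) h0g
              have hU0r : U0 ω = (r : EReal) := by rw [hUf_nonpos ω _ hgpos] at hr; exact hr
              have htb_eq : tb ω = r := by
                simp only [htbdef]
                rw [hr, EReal.toReal_coe]
              have hlim : U0 ω ≤ ((U ω (v n ω) + U' ω (v n ω) * (0 - v n ω) : ℝ) : EReal) := by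
                have hf2 : Tendsto
                    (fun y : ℝ => ((U ω (v n ω) + U' ω (v n ω) * (y - v n ω) : ℝ) : EReal))
                    (𝓝[>] (0:ℝ)) (𝓝 ((U ω (v n ω) + U' ω (v n ω) * (0 - v n ω) : ℝ) : EReal)) := by
                  rw [EReal.tendsto_coe]
                  refine Tendsto.mono_left ?_ nhdsWithin_le_nhds
                  exact (continuous_const.add
                    (continuous_const.mul (continuous_id.sub continuous_const))).tendsto 0
                refine le_of_tendsto_of_tendsto (hU0 ω) hf2 ?_
                filter_upwards [self_mem_nhdsWithin] with y hy
                exact EReal.coe_le_coe_iff.2 (hgrad ω (v n ω) y hv hy)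
              rw [hU0r] at hlim
              have hreal_lim : r ≤ U ω (v n ω) + U' ω (v n ω) * (0 - v n ω) :=
                EReal.coe_le_coe_iff.1 hlim
              have h0v : 0 - v n ω = ε n * (g ω - f ω) := by
                simp only [hvdef]
                rw [hgz]
                ring
              rw [h0v] at hreal_lim
              rw [hta_eq, htb_eq, hd_eq]
              nlinarith [hreal_lim]
          rcases le_total (tb ω) (ta ω) with hab | hab
          · rw [ENNReal.ofReal_of_nonpos (by linarith : tb ω - ta ω ≤ 0), add_zero]
            calc ENNReal.ofReal (ε n * (d n ω * f ω))
                ≤ ENNReal.ofReal (ε n * (d n ω * g ω) + (ta ω - tb ω)) :=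
                  ENNReal.ofReal_le_ofReal (by nlinarith [hstar])
              _ ≤ _ := ENNReal.ofReal_add_le
          · rw [ENNReal.ofReal_of_nonpos (by linarith : ta ω - tb ω ≤ 0), add_zero]
            rw [← ENNReal.ofReal_add
              (mul_nonneg (mul_nonneg (hε_pos n).le hdnn) h0f |>.trans_eq (by ring))
              (by linarith : (0:ℝ) ≤ tb ω - ta ω)]
            exact ENNReal.ofReal_le_ofReal (by nlinarith [hstar])
        · have hgz : g ω = 0 := by
            by_contra hgg
            have hgpos : 0 < g ω := lt_of_le_of_ne h0g (Ne.symm hgg)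
            apply hv
            simp only [hvdef]
            nlinarith [hε_lt1 n, hε_pos n]
          have hfz : f ω = 0 := by
            by_contra hff
            have hfpos : 0 < f ω := lt_of_le_of_ne h0f (Ne.symm hff)
            apply hv
            simp only [hvdef]
            rw [hgz]
            nlinarith [hε_lt1 n, hε_pos n]
          have hd_eq : d n ω = 0 := by
            simp only [hddef]
            rw [if_neg hv]
          have hta_eq : ta ω = tb ω := by
            simp only [htadef, htbdef]
            rw [hUf_nonpos ω _ hv, hUf_nonpos ω _ (by rw [hgz]; exact lt_irrefl 0)]
          rw [hd_eq, hta_eq]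
          simp
      have hm1 : AEMeasurable (fun ω => ENNReal.ofReal (ε n * (d n ω * f ω))) P :=
        hOR _ (aemeasurable_const.mul ((hdm n).mul hFm))
      have hm2 : AEMeasurable (fun ω => ENNReal.ofReal (ε n * (d n ω * g ω))) P :=
        hOR _ (aemeasurable_const.mul ((hdm n).mul hGm))
      have hmN : AEMeasurable (fun ω => ENNReal.ofReal (tb ω - ta ω)) P :=
        hOR _ (htb_m.sub (hta_m n))
      have hmPp : AEMeasurable (fun ω => ENNReal.ofReal (ta ω - tb ω)) P :=
        hOR _ ((hta_m n).sub htb_m)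
      have hmaster : (∫⁻ ω, ENNReal.ofReal (ε n * (d n ω * f ω)) ∂P)
            + (∫⁻ ω, ENNReal.ofReal (tb ω - ta ω) ∂P)
          ≤ (∫⁻ ω, ENNReal.ofReal (ε n * (d n ω * g ω)) ∂P)
            + ∫⁻ ω, ENNReal.ofReal (ta ω - tb ω) ∂P := by
        rw [← lintegral_add_left' hm1, ← lintegral_add_left' hm2]
        exact lintegral_mono_ae hR
      have hpp_vn : ∀ᵐ ω ∂P, erealPosPart (Ufield U U0 ω (v n ω)) = ENNReal.ofReal (ta ω)
          ∧ erealPosPart (-Ufield U U0 ω (v n ω)) = ENNReal.ofReal (-ta ω) := by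
        filter_upwards [hvreal n] with ω hω
        obtain ⟨r, hr⟩ := hω
        constructor <;> simp [htadef, hr, EReal.toReal_coe, St17.pp_coe, St17.pp_neg_coe]
      have hpp_g : ∀ᵐ ω ∂P, erealPosPart (Ufield U U0 ω (g ω)) = ENNReal.ofReal (tb ω)
          ∧ erealPosPart (-Ufield U U0 ω (g ω)) = ENNReal.ofReal (-tb ω) := by
        filter_upwards [hgreal] with ω hω
        obtain ⟨r, hr⟩ := hω
        constructor <;> simp [htbdef, hr, EReal.toReal_coe, St17.pp_coe, St17.pp_neg_coe]
      have hPp_ne_top : (∫⁻ ω, ENNReal.ofReal (ta ω - tb ω) ∂P) ≠ ⊤ := by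
        have hb : ∀ᵐ ω ∂P, ENNReal.ofReal (ta ω - tb ω)
            ≤ erealPosPart (Ufield U U0 ω (v n ω)) + erealPosPart (-Ufield U U0 ω (g ω)) := by
          filter_upwards [hpp_vn, hpp_g] with ω h1 h2
          rw [h1.1, h2.2, sub_eq_add_neg]
          exact ENNReal.ofReal_add_le
        refine ne_top_of_le_ne_top ?_ (lintegral_mono_ae hb)
        rw [lintegral_add_left' (hmeasPN _ (hvm n)).1]
        exact (ENNReal.add_lt_top.2 ⟨hPP_lt _, lt_top_iff_ne_top.2 hNg_ne_top⟩).ne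
      have hA2_ne_top : (∫⁻ ω, ENNReal.ofReal (ε n * (d n ω * g ω)) ∂P) ≠ ⊤ := by
        have hb : ∀ᵐ ω ∂P, ENNReal.ofReal (ε n * (d n ω * g ω))
            ≤ ENNReal.ofReal (if 0 < g ω then U' ω (2⁻¹ * g ω) * g ω else 0) := by
          filter_upwards [hg0, hF0] with ω h0g h0f
          by_cases hgpos : 0 < g ω
          · rw [if_pos hgpos]
            have hvpos : 0 < v n ω := by
              simp only [hvdef]
              nlinarith [hε_lt1 n, hε_pos n]
            have hhalf : 2⁻¹ * g ω ≤ v n ω := by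
              simp only [hvdef]
              nlinarith [hε_le n, hε_pos n]
            have hd_eq : d n ω = U' ω (v n ω) := by
              simp only [hddef]
              rw [if_pos hvpos]
            have hU'le : U' ω (v n ω) ≤ U' ω (2⁻¹ * g ω) :=
              hanti ω _ _ (by positivity) hvpos hhalf
            refine ENNReal.ofReal_le_ofReal ?_
            rw [hd_eq]
            have hnn := hU'nn ω _ hvpos
            have h5 : U' ω (v n ω) * g ω ≤ U' ω (2⁻¹ * g ω) * g ω :=
              mul_le_mul_of_nonneg_right hU'le h0g
            have h6 : ε n * (U' ω (v n ω) * g ω) ≤ U' ω (v n ω) * g ω :=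
              mul_le_of_le_one_left (mul_nonneg hnn h0g) (by linarith [hε_le n])
            linarith
          · have hgz : g ω = 0 := le_antisymm (not_lt.1 hgpos) h0g
            rw [if_neg hgpos, hgz]
            simp
        refine ne_top_of_le_ne_top hE2.ne (lintegral_mono_ae hb)
      have hident : (∫⁻ ω, ENNReal.ofReal (ta ω - tb ω) ∂P)
            + (∫⁻ ω, erealPosPart (Ufield U U0 ω (g ω)) ∂P)
            + (∫⁻ ω, erealPosPart (-Ufield U U0 ω (v n ω)) ∂P)
          = (∫⁻ ω, ENNReal.ofReal (tb ω - ta ω) ∂P)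
            + (∫⁻ ω, erealPosPart (Ufield U U0 ω (v n ω)) ∂P)
            + ∫⁻ ω, erealPosPart (-Ufield U U0 ω (g ω)) ∂P := by
        rw [← lintegral_add_left' hmPp, ← lintegral_add_left'
            (f := fun ω => ENNReal.ofReal (ta ω - tb ω) + erealPosPart (Ufield U U0 ω (g ω)))
            (hmPp.add (hmeasPN _ hGm).1),
          ← lintegral_add_left' hmN, ← lintegral_add_left'
            (f := fun ω => ENNReal.ofReal (tb ω - ta ω) + erealPosPart (Ufield U U0 ω (v n ω)))
            (hmN.add (hmeasPN _ (hvm n)).1)]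
        refine lintegral_congr_ae ?_
        filter_upwards [hpp_vn, hpp_g] with ω h1 h2
        rw [h1.1, h1.2, h2.1, h2.2]
        exact St17.ofReal_identity (ta ω) (tb ω)
      have hfinPg := (hPP_lt (fun ω => g ω)).ne
      have hfinPv := (hPP_lt (v n)).ne
      have hPp_le_N : (∫⁻ ω, ENNReal.ofReal (ta ω - tb ω) ∂P)
          ≤ ∫⁻ ω, ENNReal.ofReal (tb ω - ta ω) ∂P := by
        by_cases hNv : (∫⁻ ω, erealPosPart (-Ufield U U0 ω (v n ω)) ∂P) = ⊤
        · have hLHS : (∫⁻ ω, ENNReal.ofReal (ta ω - tb ω) ∂P)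
              + (∫⁻ ω, erealPosPart (Ufield U U0 ω (g ω)) ∂P)
              + (∫⁻ ω, erealPosPart (-Ufield U U0 ω (v n ω)) ∂P) = ⊤ := by
            rw [hNv, add_top]
          rw [hident] at hLHS
          have hN_top : (∫⁻ ω, ENNReal.ofReal (tb ω - ta ω) ∂P) = ⊤ := by
            rcases ENNReal.add_eq_top.1 hLHS with h1 | h1
            · rcases ENNReal.add_eq_top.1 h1 with h2 | h2
              · exact h2
              · exact absurd h2 hfinPv
            · exact absurd h1 hNg_ne_top
          rw [hN_top]
          exact le_top
        · have hLHS_ne : ((∫⁻ ω, ENNReal.ofReal (ta ω - tb ω) ∂P)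
              + (∫⁻ ω, erealPosPart (Ufield U U0 ω (g ω)) ∂P)
              + (∫⁻ ω, erealPosPart (-Ufield U U0 ω (v n ω)) ∂P)) ≠ ⊤ := by
            simp only [ne_eq, ENNReal.add_eq_top, not_or]
            exact ⟨⟨hPp_ne_top, hfinPg⟩, hNv⟩
          have hRHS_ne : ((∫⁻ ω, ENNReal.ofReal (tb ω - ta ω) ∂P)
              + (∫⁻ ω, erealPosPart (Ufield U U0 ω (v n ω)) ∂P)
              + (∫⁻ ω, erealPosPart (-Ufield U U0 ω (g ω)) ∂P)) ≠ ⊤ := by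
            rw [← hident]
            exact hLHS_ne
          have hN_ne_top : (∫⁻ ω, ENNReal.ofReal (tb ω - ta ω) ∂P) ≠ ⊤ :=
            ne_top_of_le_ne_top hRHS_ne (le_self_add.trans le_self_add)
          have hEUn := hEUle n
          rw [hEU_eq _ _ (hcoe n), hEU_eq g (fun ω => g ω) (Filter.EventuallyEq.refl _ _),
            St17.coe_ennreal_sub_finite hfinPv hNv,
            St17.coe_ennreal_sub_finite hfinPg hNg_ne_top, EReal.coe_le_coe_iff] at hEUn
          have hident_r := congrArg ENNReal.toReal hident
          rw [ENNReal.toReal_add (ENNReal.add_ne_top.2 ⟨hPp_ne_top, hfinPg⟩) hNv,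
            ENNReal.toReal_add hPp_ne_top hfinPg,
            ENNReal.toReal_add (ENNReal.add_ne_top.2 ⟨hN_ne_top, hfinPv⟩) hNg_ne_top,
            ENNReal.toReal_add hN_ne_top hfinPv] at hident_r
          rw [← ENNReal.toReal_le_toReal hPp_ne_top hN_ne_top]
          linarith
      have hN_ne_top2 : (∫⁻ ω, ENNReal.ofReal (tb ω - ta ω) ∂P) ≠ ⊤ := by
        refine ne_top_of_le_ne_top (ENNReal.add_ne_top.2 ⟨hA2_ne_top, hPp_ne_top⟩) ?_
        exact le_trans le_add_self hmaster
      have hcore : (∫⁻ ω, ENNReal.ofReal (ε n * (d n ω * f ω)) ∂P)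
          ≤ ∫⁻ ω, ENNReal.ofReal (ε n * (d n ω * g ω)) ∂P := by
        have h2 := hmaster.trans (add_le_add_right hPp_le_N _)
        exact (ENNReal.add_le_add_iff_right hN_ne_top2).1 h2
      have hfac : ∀ w : Ω → ℝ, AEMeasurable w P →
          (∫⁻ ω, ENNReal.ofReal (ε n * (d n ω * w ω)) ∂P)
            = ENNReal.ofReal (ε n) * ∫⁻ ω, ENNReal.ofReal (d n ω * w ω) ∂P := by
        intro w hw
        rw [← lintegral_const_mul'' (f := fun ω => ENNReal.ofReal (d n ω * w ω)) _
            (hOR _ ((hdm n).mul hw))]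
        refine lintegral_congr fun ω => ?_
        rw [← ENNReal.ofReal_mul (hε_pos n).le]
      rw [hfac _ hFm, hfac _ hGm] at hcore
      exact (ENNReal.mul_le_mul_iff_right (ENNReal.ofReal_pos.2 (hε_pos n)).ne'
        ENNReal.ofReal_ne_top).1 hcore
    -- step 2: pass to the limit
    have hε0 : Tendsto ε atTop (𝓝 (0:ℝ)) := by
      rw [hεdef]
      have h1 : Tendsto (fun n : ℕ => (n : ℝ) + 2) atTop atTop :=
        tendsto_atTop_add_const_right _ _ tendsto_natCast_atTop_atTop
      exact tendsto_inv_atTop_zero.comp h1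
    have hlim_g : ∀ᵐ ω ∂P, Tendsto (fun n => ENNReal.ofReal (d n ω * g ω)) atTop
        (𝓝 (dens ω * ENNReal.ofReal (g ω))) := by
      filter_upwards [hg0, hF0] with ω h0g h0f
      by_cases hgpos : 0 < g ω
      · have hvt : Tendsto (fun n => v n ω) atTop (𝓝 (g ω)) := by
          simp only [hvdef]
          have h2 := (((tendsto_const_nhds (x := (1:ℝ))).sub hε0).mul_const (g ω)).add (hε0.mul_const (f ω))
          simpa using h2
        have hvpos : ∀ n, 0 < v n ω := fun n => by
          simp only [hvdef]
          nlinarith [hε_lt1 n, hε_pos n]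
        have hU't : Tendsto (fun n => U' ω (v n ω)) atTop (𝓝 (U' ω (g ω))) :=
          (((hU'cont ω).continuousAt (Ioi_mem_nhds hgpos)).tendsto).comp hvt
        have hd_eq : ∀ m : ℕ, d m ω = U' ω (v m ω) := fun m => by
          simp only [hddef]
          rw [if_pos (hvpos m)]
        have hdens_eq : dens ω = ENNReal.ofReal (U' ω (g ω)) := by
          rw [hdensdef]
          dsimp only
          rw [if_pos hgpos]
        rw [hdens_eq, ← ENNReal.ofReal_mul (hU'nn ω _ hgpos)]
        have h3 := (ENNReal.continuous_ofReal.tendsto _).comp (hU't.mul_const (g ω))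
        refine h3.congr fun m => ?_
        rw [Function.comp_apply, hd_eq m]
      · have hgz : g ω = 0 := le_antisymm (not_lt.1 hgpos) h0g
        rw [hgz]
        simp only [mul_zero, ENNReal.ofReal_zero]
        exact tendsto_const_nhds
    have hlim_f : ∀ᵐ ω ∂P, Tendsto (fun n => ENNReal.ofReal (d n ω * f ω)) atTop
        (𝓝 (dens ω * ENNReal.ofReal (f ω))) := by
      filter_upwards [hg0, hF0] with ω h0g h0f
      by_cases hgpos : 0 < g ω
      · have hvt : Tendsto (fun n => v n ω) atTop (𝓝 (g ω)) := by
          simp only [hvdef]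
          have h2 := (((tendsto_const_nhds (x := (1:ℝ))).sub hε0).mul_const (g ω)).add (hε0.mul_const (f ω))
          simpa using h2
        have hvpos : ∀ n, 0 < v n ω := fun n => by
          simp only [hvdef]
          nlinarith [hε_lt1 n, hε_pos n]
        have hU't : Tendsto (fun n => U' ω (v n ω)) atTop (𝓝 (U' ω (g ω))) :=
          (((hU'cont ω).continuousAt (Ioi_mem_nhds hgpos)).tendsto).comp hvt
        have hd_eq : ∀ m : ℕ, d m ω = U' ω (v m ω) := fun m => by
          simp only [hddef]
          rw [if_pos (hvpos m)]
        have hdens_eq : dens ω = ENNReal.ofReal (U' ω (g ω)) := by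
          rw [hdensdef]
          dsimp only
          rw [if_pos hgpos]
        rw [hdens_eq, ← ENNReal.ofReal_mul (hU'nn ω _ hgpos)]
        have h3 := (ENNReal.continuous_ofReal.tendsto _).comp (hU't.mul_const (f ω))
        refine h3.congr fun m => ?_
        rw [Function.comp_apply, hd_eq m]
      · have hgz : g ω = 0 := le_antisymm (not_lt.1 hgpos) h0g
        by_cases hfpos : 0 < f ω
        · have hvpos : ∀ n, 0 < v n ω := fun n => by
            simp only [hvdef]
            rw [hgz]
            nlinarith [hε_pos n, hε_lt1 n]
          have hvt : Tendsto (fun n => v n ω) atTop (𝓝[>] (0:ℝ)) := by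
            refine tendsto_nhdsWithin_of_tendsto_nhds_of_eventually_within _ ?_
              (Eventually.of_forall fun n => Set.mem_Ioi.2 (hvpos n))
            simp only [hvdef]
            have h2 := (((tendsto_const_nhds (x := (1:ℝ))).sub hε0).mul_const (g ω)).add (hε0.mul_const (f ω))
            rw [hgz] at h2 ⊢
            simpa using h2
          have hU't : Tendsto (fun n => ENNReal.ofReal (U' ω (v n ω))) atTop (𝓝 (U'0 ω)) :=
            (hU'0 ω).comp hvt
          have hd_eq : ∀ m : ℕ, d m ω = U' ω (v m ω) := fun m => by
            simp only [hddef]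
            rw [if_pos (hvpos m)]
          have hdens_eq : dens ω = U'0 ω := by
            rw [hdensdef]
            dsimp only
            rw [if_neg hgpos]
          rw [hdens_eq]
          have h2 : Tendsto (fun n => ENNReal.ofReal (U' ω (v n ω)) * ENNReal.ofReal (f ω))
              atTop (𝓝 (U'0 ω * ENNReal.ofReal (f ω))) :=
            ENNReal.Tendsto.mul_const hU't (Or.inr ENNReal.ofReal_ne_top)
          refine h2.congr fun m => ?_
          rw [← ENNReal.ofReal_mul (hU'nn ω _ (hvpos m)), hd_eq m]
        · have hfz : f ω = 0 := le_antisymm (not_lt.1 hfpos) h0f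
          rw [hfz]
          simp only [mul_zero, ENNReal.ofReal_zero]
          exact tendsto_const_nhds
    have hbound : ∀ n, (fun ω => ENNReal.ofReal (d n ω * g ω)) ≤ᵐ[P]
        fun ω => ENNReal.ofReal (if 0 < g ω then U' ω (2⁻¹ * g ω) * g ω else 0) := by
      intro n
      filter_upwards [hg0, hF0] with ω h0g h0f
      by_cases hgpos : 0 < g ω
      · rw [if_pos hgpos]
        have hvpos : 0 < v n ω := by
          simp only [hvdef]
          nlinarith [hε_lt1 n, hε_pos n]
        have hhalf : 2⁻¹ * g ω ≤ v n ω := by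
          simp only [hvdef]
          nlinarith [hε_le n, hε_pos n]
        have hd_eq : d n ω = U' ω (v n ω) := by
          simp only [hddef]
          rw [if_pos hvpos]
        refine ENNReal.ofReal_le_ofReal ?_
        rw [hd_eq]
        exact mul_le_mul_of_nonneg_right (hanti ω _ _ (by positivity) hvpos hhalf) h0g
      · have hgz : g ω = 0 := le_antisymm (not_lt.1 hgpos) h0g
        rw [hgz]
        simp
    have hDCT : Tendsto (fun n => ∫⁻ ω, ENNReal.ofReal (d n ω * g ω) ∂P) atTop
        (𝓝 (∫⁻ ω, dens ω * ENNReal.ofReal (g ω) ∂P)) :=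
      tendsto_lintegral_of_dominated_convergence' _
        (fun n => hOR _ ((hdm n).mul hGm)) hbound hE2.ne hlim_g
    calc (∫⁻ ω, dens ω * ENNReal.ofReal (f ω) ∂P)
        = ∫⁻ ω, Filter.liminf (fun n => ENNReal.ofReal (d n ω * f ω)) atTop ∂P := by
          refine lintegral_congr_ae ?_
          filter_upwards [hlim_f] with ω hω
          exact hω.liminf_eq.symm
      _ ≤ Filter.liminf (fun n => ∫⁻ ω, ENNReal.ofReal (d n ω * f ω) ∂P) atTop :=
          lintegral_liminf_le' fun n => hOR _ ((hdm n).mul hFm)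
      _ ≤ Filter.liminf (fun n => ∫⁻ ω, ENNReal.ofReal (d n ω * g ω) ∂P) atTop :=
          Filter.liminf_le_liminf (Eventually.of_forall hKn)
      _ = ∫⁻ ω, dens ω * ENNReal.ofReal (g ω) ∂P := hDCT.liminf_eq
  -- finiteness of the pairing with g
  have hfin_g : (∫⁻ ω, dens ω * ENNReal.ofReal (g ω) ∂P) < ⊤ := by
    have hpt : ∀ᵐ ω ∂P, dens ω * ENNReal.ofReal (g ω)
        = ENNReal.ofReal (if 0 < g ω then U' ω (g ω) * g ω else 0) := by
      filter_upwards [hg0] with ω h0g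
      rw [hdensdef]
      by_cases hgpos : 0 < g ω
      · rw [if_pos hgpos]
        dsimp only
        rw [if_pos hgpos, ← ENNReal.ofReal_mul (hU'nn ω _ hgpos)]
      · have hgz : g ω = 0 := le_antisymm (not_lt.1 hgpos) h0g
        rw [if_neg hgpos, hgz]
        simp
    rw [lintegral_congr_ae hpt]
    exact hE1
  -- positivity of the pairing with g
  have hpos0 : 0 < ∫⁻ ω, dens ω * ENNReal.ofReal (g ω) ∂P := by
    by_contra hz
    push_neg at hz
    have h0 : (∫⁻ ω, dens ω * ENNReal.ofReal (g ω) ∂P) = 0 := le_antisymm hz (by positivity)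
    have hmul_m : AEMeasurable (fun ω => dens ω * ENNReal.ofReal (g ω)) P :=
      hdensm.mul (ENNReal.measurable_ofReal.comp_aemeasurable hGm)
    have hae := (lintegral_eq_zero_iff' hmul_m).1 h0
    have hbad : ∀ᵐ ω ∂P, ω ∉ {ω | 0 < g ω ∧ Ufield U U0 ω (g ω) < Uinf ω} := by
      filter_upwards [hae] with ω hω
      rintro ⟨hgpos, hUlt⟩
      have hω' : dens ω * ENNReal.ofReal (g ω) = 0 := hω
      have hgz : ENNReal.ofReal (g ω) ≠ 0 := (ENNReal.ofReal_pos.2 hgpos).ne'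
      have hdz : dens ω = 0 := by
        rcases mul_eq_zero.1 hω' with hh | hh
        · exact hh
        · exact absurd hh hgz
      rw [hdensdef] at hdz
      dsimp only at hdz
      rw [if_pos hgpos] at hdz
      have hU'z : U' ω (g ω) ≤ 0 := by
        by_contra hU'p
        push_neg at hU'p
        exact (ENNReal.ofReal_pos.2 hU'p).ne' hdz
      have hU'zz : U' ω (g ω) = 0 := le_antisymm hU'z (hU'nn ω _ hgpos)
      have hconst : ∀ y : ℝ, g ω ≤ y → U ω y = U ω (g ω) := by
        intro y hy
        have h1 := hgrad ω (g ω) y hgpos (lt_of_lt_of_le hgpos hy)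
        rw [hU'zz, zero_mul, add_zero] at h1
        have h2 := hUmono ω (Set.mem_Ioi.2 hgpos) (Set.mem_Ioi.2 (lt_of_lt_of_le hgpos hy)) hy
        linarith
      have hUinf_eq : Uinf ω = ((U ω (g ω) : ℝ) : EReal) := by
        refine tendsto_nhds_unique (hUinf ω) ?_
        refine Tendsto.congr' ?_ tendsto_const_nhds
        filter_upwards [eventually_ge_atTop (g ω)] with y hy
        rw [hconst y hy]
      rw [hUf_pos ω _ hgpos, hUinf_eq] at hUlt
      exact lt_irrefl _ hUlt
    exact absurd (measure_eq_zero_iff_ae_notMem.2 hbad) hnondeg.ne'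
  -- sigma-finiteness
  have hdens_fin : ∀ᵐ ω ∂P, dens ω ≠ ⊤ := by
    have h1 : (∫⁻ ω, dens ω * ENNReal.ofReal (h ω) ∂P) < ⊤ :=
      lt_of_le_of_lt (key h hhC) hfin_g
    have h2 : ∀ᵐ ω ∂P, dens ω * ENNReal.ofReal (h ω) < ⊤ :=
      ae_lt_top' (hdensm.mul (ENNReal.measurable_ofReal.comp_aemeasurable h.aemeasurable)) h1.ne
    filter_upwards [h2, hnonneg h hhC, hhpos] with ω hω h0h hne
    intro hc
    rw [hc, ENNReal.top_mul ((ENNReal.ofReal_pos.2 (lt_of_le_of_ne h0h (Ne.symm hne))).ne')] at hω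
    exact lt_irrefl _ hω
  have hsf : SigmaFinite (P.withDensity dens) := SigmaFinite.withDensity_of_ne_top hdens_fin
  -- pairing via the density
  have hpair : ∀ w : Ω →ₘ[P] ℝ,
      pairing (muOf P U' U'0 g) w = ∫⁻ ω, dens ω * ENNReal.ofReal (w ω) ∂P := by
    intro w
    have hwm : AEMeasurable (fun ω => ENNReal.ofReal (w ω)) P :=
      ENNReal.measurable_ofReal.comp_aemeasurable w.aemeasurable
    simp only [pairing]
    rw [hmuOf, lintegral_withDensity_eq_lintegral_mul₀ hdensm hwm]
    exact lintegral_congr fun ω => rfl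
  have hfinal_fin : pairing (muOf P U' U'0 g) g < ⊤ := by
    rw [hpair]
    exact hfin_g
  have hfinal_pos : 0 < pairing (muOf P U' U'0 g) g := by
    rw [hpair]
    exact hpos0
  have hfinal_sup : (⨆ f ∈ C, pairing (muOf P U' U'0 g) f) = pairing (muOf P U' U'0 g) g := by
    refine le_antisymm ?_ (le_biSup _ hgC)
    refine iSup₂_le fun f hf => ?_
    rw [hpair, hpair]
    exact key f hf
  have hac : muOf P U' U'0 g ≪ P := by
    rw [hmuOf]
    exact withDensity_absolutelyContinuous P dens
  have hsf' : SigmaFinite (muOf P U' U'0 g) := by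
    rw [hmuOf]
    exact hsf
  exact ⟨⟨⟨hgC, hgmaxmax⟩, Or.inr ⟨muOf P U' U'0 g, hac, hsf', hfinal_pos, hfinal_fin,
    hfinal_sup⟩⟩, hac, hsf', hfinal_pos, hfinal_fin, hfinal_sup⟩
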